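/- Let p be an odd prime, and assume D is a p-group and I is nontrivial, with the decomposition I = I_1 × ⋯ × I_s chosen so that every I_l is a nontrivial cyclic group (so s is the p-rank of I). Let G' be the maximal subgroup of G of order prime to p, and let ψ : G → \bar{ℚ}_p^× be a group character such that ψ restricted to G' is injective and ψ is nontrivial on D; let O_ψ = ℤ_p[ψ(G)] and let ψ also denote the induced ring homomorphism ℤ_p[G] → O_ψ. Then one has the equality of ideals of O_ψ: (ψ(#I·ν_I)) + ψ(#I − ν_I·φ̃^{-1})·ψ(𝓙)·O_ψ = (ψ(𝓘_D)·O_ψ)^{s−1}·(ψ(#I − ν_I·φ̃^{-1})). (This is Lemma 5.2(2) of the paper, ψ(𝓐) = ψ(𝓘_D)^{s−1}·ψ(𝓑) for 𝓐 = h·SFitt¹_{ℤ_p[G]}(A⊗ℤ_p) and 𝓑 = (1 − (ν_I/#I)φ^{-1}), with 𝓐 expressed via Theorem 1.3 and denominators cleared by multiplying by #I.) -/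

import Mathlib

open MonoidAlgebra Finset

/-- The sum `ν_H = Σ_{σ ∈ H} σ` of the elements of a subgroup `H` in the group algebra. -/
noncomputable def nuElt (R : Type) [CommRing R] {G : Type} [CommGroup G] [Fintype G]
    (H : Subgroup G) : MonoidAlgebra R G :=
  letI := Classical.decPred (· ∈ H)
  ∑ σ ∈ Finset.univ.filter (· ∈ H), MonoidAlgebra.of R G σ

/-- `I = I_1 × ⋯ × I_s` where `I_l` is the cyclic subgroup generated by `σ l`:
every element of `I` is, in a unique way, the product of elements of the subgroups
`⟨σ l⟩`. -/
def IsDecomp {G : Type} [CommGroup G] (I : Subgroup G) {s : ℕ} (σ : Fin s → G) : Prop :=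
  (∀ l, σ l ∈ I) ∧
    ∀ g ∈ I, ∃! x : ∀ l, Subgroup.zpowers (σ l), (∏ l, ((x l : G))) = g

/-- The ideal `Z_i ⊆ R[G]` generated by the products `ν_{l_1} ⋯ ν_{l_{s-i}}` over all
`(s-i)`-element subsets `{l_1 < ⋯ < l_{s-i}}` of `{1, …, s}`. -/
noncomputable def ZidealR (R : Type) [CommRing R] {G : Type} [CommGroup G] [Fintype G]
    {s : ℕ} (σ : Fin s → G) (i : ℕ) : Ideal (MonoidAlgebra R G) :=
  Ideal.span {x | ∃ T : Finset (Fin s), T.card = s - i ∧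
    x = ∏ l ∈ T, nuElt R (Subgroup.zpowers (σ l))}

/-- The ideal `𝓘_H = ker(R[G] → R[G/H])`. -/
noncomputable def kerIdealR (R : Type) [CommRing R] {G : Type} [CommGroup G] [Fintype G]
    (H : Subgroup G) : Ideal (MonoidAlgebra R G) :=
  RingHom.ker (MonoidAlgebra.mapDomainRingHom R (QuotientGroup.mk' H))

section AuxHelpers

variable {O : Type} [CommRing O]

lemma pow_sub_one_dvd' (u : O) (m : ℕ) : (u - 1) ∣ u ^ m - 1 :=
  ⟨∑ i ∈ Finset.range m, u ^ i, by rw [mul_comm]; exact (geom_sum_mul u m).symm⟩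

lemma zpow_sub_one_dvd' (u : Oˣ) (n : ℤ) : ((u : O) - 1) ∣ (((u ^ n : Oˣ) : O) - 1) := by
  rcases n with m | m
  · rw [Int.ofNat_eq_coe, zpow_natCast, Units.val_pow_eq_pow_val]
    exact pow_sub_one_dvd' _ m
  · rw [zpow_negSucc]
    have h1 : (((u ^ (m + 1))⁻¹ : Oˣ) : O) - 1
        = -(((u ^ (m + 1))⁻¹ : Oˣ) : O) * (((u ^ (m + 1) : Oˣ) : O) - 1) := by
      linear_combination (Units.inv_mul (u ^ (m + 1)) : ((u ^ (m+1))⁻¹ : Oˣ).val * _ = _)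
    rw [h1, Units.val_pow_eq_pow_val]
    exact Dvd.dvd.mul_left (pow_sub_one_dvd' _ _) _

lemma sub_one_dvd_p [IsDomain O] {p : ℕ} (hp : p.Prime) (u : O) (k : ℕ)
    (hu : u ^ p ^ k = 1) (hne : u ≠ 1) : (u - 1) ∣ (p : O) := by
  have hdvd : orderOf u ∣ p ^ k := orderOf_dvd_of_pow_eq_one hu
  obtain ⟨m, hmk, hm⟩ := (Nat.dvd_prime_pow hp).mp hdvd
  have hm0 : m ≠ 0 := by
    rintro rfl
    exact hne (orderOf_eq_one_iff.mp (by simpa using hm))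
  set v := u ^ p ^ (m - 1) with hv
  have hvp : v ^ p = 1 := by
    rw [hv, ← pow_mul, ← pow_succ, Nat.sub_add_cancel (Nat.one_le_iff_ne_zero.mpr hm0),
      ← hm, pow_orderOf_eq_one]
  have hvne : v ≠ 1 := by
    intro h
    have h2 : orderOf u ∣ p ^ (m - 1) := orderOf_dvd_of_pow_eq_one h
    rw [hm] at h2
    have := (Nat.pow_dvd_pow_iff_le_right hp.one_lt).mp h2
    omega
  have hgeom : (∑ i ∈ Finset.range p, v ^ i) * (v - 1) = 0 := by
    rw [geom_sum_mul, hvp, sub_self]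
  have hsum : ∑ i ∈ Finset.range p, v ^ i = 0 := by
    rcases mul_eq_zero.mp hgeom with h | h
    · exact h
    · exact absurd (sub_eq_zero.mp h) hvne
  have hpeq : (p : O) = ∑ i ∈ Finset.range p, (1 - v ^ i) := by
    rw [Finset.sum_sub_distrib, hsum, sub_zero, Finset.sum_const, Finset.card_range,
      nsmul_eq_mul, mul_one]
  have hdv : (v - 1) ∣ (p : O) := by
    rw [hpeq]
    refine Finset.dvd_sum fun i _ => ?_
    rw [← neg_sub (v ^ i) 1]
    exact dvd_neg.mpr (pow_sub_one_dvd' v i)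
  exact dvd_trans (pow_sub_one_dvd' u (p ^ (m - 1))) hdv

lemma prod_mem_pow' {ι : Type} (J : Ideal O) (T : Finset ι) (a : ι → O)
    (h : ∀ i ∈ T, a i ∈ J) : (∏ i ∈ T, a i) ∈ J ^ T.card := by
  classical
  induction T using Finset.induction_on with
  | empty => simp [Ideal.one_eq_top]
  | insert _ _ hx ih =>
    rename_i x T'
    rw [Finset.prod_insert hx, Finset.card_insert_of_notMem hx, pow_succ']
    exact Ideal.mul_mem_mul (h _ (Finset.mem_insert_self _ _))
      (ih fun i hi => h i (Finset.mem_insert_of_mem hi))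

lemma ideal_map_sum' {R S : Type} [CommRing R] [CommRing S] (f : R →+* S) {ι : Type}
    (T : Finset ι) (J : ι → Ideal R) :
    Ideal.map f (∑ i ∈ T, J i) = ∑ i ∈ T, Ideal.map f (J i) := by
  classical
  induction T using Finset.induction_on with
  | empty => simp [Ideal.map_bot]
  | insert _ _ hx ih =>
    rw [Finset.sum_insert hx, Finset.sum_insert hx, Submodule.add_eq_sup,
      Submodule.add_eq_sup, Ideal.map_sup, ih]

lemma sum_ideal_le' {R : Type} [CommRing R] {ι : Type} {T : Finset ι} {J : ι → Ideal R}
    {B : Ideal R} (h : ∀ i ∈ T, J i ≤ B) : (∑ i ∈ T, J i) ≤ B := by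
  classical
  induction T using Finset.induction_on with
  | empty => simp
  | insert _ _ hx ih =>
    rw [Finset.sum_insert hx, Submodule.add_eq_sup]
    exact sup_le (h _ (Finset.mem_insert_self _ _))
      (ih fun i hi => h i (Finset.mem_insert_of_mem hi))

variable (R : Type) [CommRing R] [Algebra R O]
variable {G : Type} [CommGroup G] [Fintype G]

lemma lift_nuElt_zero [IsDomain O] (ψ : G →* Oˣ) (H : Subgroup G)
    (h : ∃ g ∈ H, ψ g ≠ 1) :
    (MonoidAlgebra.lift R O G ((Units.coeHom O).comp ψ)) (nuElt R H) = 0 := by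
  classical
  obtain ⟨g0, hg0, hne⟩ := h
  unfold nuElt
  rw [map_sum]
  simp only [MonoidAlgebra.lift_of, MonoidHom.comp_apply, Units.coeHom_apply]
  set S := ∑ g ∈ Finset.univ.filter (· ∈ H), ((ψ g : Oˣ) : O) with hS
  have key : ((ψ g0 : Oˣ) : O) * S = S := by
    rw [hS, Finset.mul_sum]
    refine Finset.sum_nbij' (fun g => g0 * g) (fun g => g0⁻¹ * g) ?_ ?_ ?_ ?_ ?_
    · intro a ha
      simp only [Finset.mem_filter, Finset.mem_univ, true_and] at ha ⊢
      exact H.mul_mem hg0 ha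
    · intro a ha
      simp only [Finset.mem_filter, Finset.mem_univ, true_and] at ha ⊢
      exact H.mul_mem (H.inv_mem hg0) ha
    · intro a _; group
    · intro a _; group
    · intro a _
      rw [map_mul, Units.val_mul]
  have h0 : (((ψ g0 : Oˣ) : O) - 1) * S = 0 := by linear_combination key
  rcases mul_eq_zero.mp h0 with h | h
  · exact absurd (Units.ext (by simpa using sub_eq_zero.mp h)) hne
  · exact h

lemma lift_nuElt_card (ψ : G →* Oˣ) (H : Subgroup G)
    (h : ∀ g ∈ H, ψ g = 1) :
    (MonoidAlgebra.lift R O G ((Units.coeHom O).comp ψ)) (nuElt R H) = (Nat.card H : O) := by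
  classical
  unfold nuElt
  rw [map_sum]
  simp only [MonoidAlgebra.lift_of, MonoidHom.comp_apply, Units.coeHom_apply]
  rw [Finset.sum_congr rfl (fun g hg => by
    rw [h g (by simpa using (Finset.mem_filter.mp hg).2), Units.val_one])]
  rw [Finset.sum_const, nsmul_eq_mul, mul_one]
  congr 1
  rw [Nat.card_eq_fintype_card, Fintype.card_subtype]

lemma map_ker_le (D : Subgroup G) (ψ : G →* Oˣ) :
    Ideal.map (MonoidAlgebra.lift R O G ((Units.coeHom O).comp ψ)).toRingHom (kerIdealR R D)
      ≤ Ideal.span ((fun d => ((ψ d : Oˣ) : O) - 1) '' (D : Set G)) := by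
  set J := Ideal.span ((fun d => ((ψ d : Oˣ) : O) - 1) '' (D : Set G)) with hJ
  set f := MonoidAlgebra.lift R O G ((Units.coeHom O).comp ψ) with hfdef
  rw [Ideal.map_le_iff_le_comap]
  intro x hx
  have hx0 : (MonoidAlgebra.mapDomainRingHom R (QuotientGroup.mk' D)) x = 0 := hx
  have hker : D ≤ ((Units.map (Ideal.Quotient.mk J).toMonoidHom).comp ψ).ker := by
    intro d hd
    rw [MonoidHom.mem_ker]
    apply Units.ext
    show Ideal.Quotient.mk J ((ψ d : Oˣ) : O) = 1
    rw [show (1 : O ⧸ J) = Ideal.Quotient.mk J 1 from rfl, Ideal.Quotient.eq]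
    exact Ideal.subset_span ⟨d, hd, rfl⟩
  set χ : G ⧸ D →* (O ⧸ J)ˣ := QuotientGroup.lift D _ hker with hχ
  set L := MonoidAlgebra.lift R (O ⧸ J) (G ⧸ D) ((Units.coeHom _).comp χ) with hL
  have hcomm : (Ideal.Quotient.mkₐ R J).comp f
      = L.comp (MonoidAlgebra.mapDomainAlgHom R R (QuotientGroup.mk' D)) := by
    refine MonoidAlgebra.algHom_ext ?_ (Subsingleton.elim _ _)
    intro g
    show (Ideal.Quotient.mkₐ R J) (f (MonoidAlgebra.of R G g))
      = L ((MonoidAlgebra.mapDomainAlgHom R R (QuotientGroup.mk' D)) (MonoidAlgebra.of R G g))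
    rw [hfdef, MonoidAlgebra.lift_of]
    have h2 : (MonoidAlgebra.mapDomainAlgHom R R (QuotientGroup.mk' D)) (MonoidAlgebra.of R G g)
        = MonoidAlgebra.of R (G ⧸ D) (QuotientGroup.mk' D g) := by
      simp [MonoidAlgebra.mapDomainAlgHom, MonoidAlgebra.of_apply, Finsupp.mapDomain_single]
    rw [h2, hL, MonoidAlgebra.lift_of]
    rfl
  have hz : Ideal.Quotient.mk J (f x) = 0 := by
    have h3 := DFunLike.congr_fun hcomm x
    have h4 : (MonoidAlgebra.mapDomainAlgHom R R (QuotientGroup.mk' D)) x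
        = (MonoidAlgebra.mapDomainRingHom R (QuotientGroup.mk' D)) x := rfl
    simp only [AlgHom.comp_apply] at h3
    rw [h4, hx0, map_zero] at h3
    exact h3
  exact Ideal.mem_comap.mpr (Ideal.Quotient.eq_zero_iff_mem.mp hz)

lemma mapSum_eq (ψ : G →* Oˣ) (D : Subgroup G) {s : ℕ} (σ : Fin s → G) (hs : s ≠ 0)
    (hK : ∀ l, (MonoidAlgebra.lift R O G ((Units.coeHom O).comp ψ))
        (nuElt R (Subgroup.zpowers (σ l)))
      ∈ Ideal.map (MonoidAlgebra.lift R O G ((Units.coeHom O).comp ψ)).toRingHom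
          (kerIdealR R D)) :
    Ideal.map (MonoidAlgebra.lift R O G ((Units.coeHom O).comp ψ)).toRingHom
        (∑ i ∈ Finset.range s, ZidealR R σ (i + 1) * kerIdealR R D ^ i)
      = (Ideal.map (MonoidAlgebra.lift R O G ((Units.coeHom O).comp ψ)).toRingHom
          (kerIdealR R D)) ^ (s - 1) := by
  set f := MonoidAlgebra.lift R O G ((Units.coeHom O).comp ψ) with hfdef
  set K := Ideal.map f.toRingHom (kerIdealR R D) with hKdef
  rw [ideal_map_sum']
  apply le_antisymm
  · apply sum_ideal_le'
    intro i hi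
    rw [Finset.mem_range] at hi
    rw [Ideal.map_mul, Ideal.map_pow]
    have h1 : Ideal.map f.toRingHom (ZidealR R σ (i + 1)) ≤ K ^ (s - 1 - i) := by
      rw [ZidealR, Ideal.map_span, Ideal.span_le]
      rintro y ⟨x, ⟨T, hT, rfl⟩, rfl⟩
      show f (∏ l ∈ T, nuElt R (Subgroup.zpowers (σ l))) ∈ _
      rw [map_prod]
      have h2 := prod_mem_pow' K T _ (fun l _ => hK l)
      have h3 : T.card = s - 1 - i := by omega
      rwa [h3] at h2
    calc Ideal.map f.toRingHom (ZidealR R σ (i + 1)) * K ^ i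
        ≤ K ^ (s - 1 - i) * K ^ i := Ideal.mul_mono_left h1
      _ = K ^ (s - 1) := by rw [← pow_add]; congr 1; omega
  · have hi : s - 1 ∈ Finset.range s := Finset.mem_range.mpr (by omega)
    refine le_trans ?_ (Finset.single_le_sum (f := fun i =>
      Ideal.map f.toRingHom (ZidealR R σ (i + 1) * kerIdealR R D ^ i)) (fun _ _ => bot_le) hi)
    show K ^ (s - 1) ≤ Ideal.map f.toRingHom (ZidealR R σ (s - 1 + 1) * kerIdealR R D ^ (s - 1))
    rw [Ideal.map_mul, Ideal.map_pow]
    have htop : Ideal.map f.toRingHom (ZidealR R σ (s - 1 + 1)) = ⊤ := by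
      rw [Ideal.eq_top_iff_one]
      have h1 : (1 : MonoidAlgebra R G) ∈ ZidealR R σ (s - 1 + 1) := by
        apply Ideal.subset_span
        exact ⟨∅, by simp; omega, by simp⟩
      simpa using Ideal.mem_map_of_mem f.toRingHom h1
    rw [htop, ← Ideal.one_eq_top, one_mul]

end AuxHelpers

/-- for `p` an odd prime, `D` a `p`-group, `I` nontrivial decomposed into
nontrivial cyclic subgroups `⟨σ l⟩` (`s` the `p`-rank of `I`), and `ψ` a character of
`G` nontrivial on `D` whose restriction to the maximal subgroup `G'` of order prime to
`p` (i.e. to `{g : G | (orderOf g).Coprime p}`) is injective, with values in (the units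
of) the domain `O_ψ = ℤ_p[ψ(G)]`, one has
`(ψ(#I·ν_I)) + ψ(#I − ν_I·φ̃⁻¹)·ψ(𝓙) = ψ(𝓘_D)^{s−1}·(ψ(#I − ν_I·φ̃⁻¹))` as ideals of
`O_ψ`.  (This is `ψ(𝓐) = ψ(𝓘_D)^{s−1}·ψ(𝓑)` with denominators cleared by `#I`.) -/
theorem statement18 (p : ℕ) [Fact p.Prime] (hp2 : p ≠ 2)
    {G : Type} [CommGroup G] [Fintype G] (I D : Subgroup G) (hID : I ≤ D)
    (φt : G) (hφt : φt ∈ D) (hφgen : ∀ d ∈ D, ∃ n : ℤ, φt ^ n * d⁻¹ ∈ I)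
    (hD : IsPGroup p ↥D) (hInontriv : I ≠ ⊥)
    {s : ℕ} (σ : Fin s → G) (hdec : IsDecomp I σ) (hnt : ∀ l, σ l ≠ 1)
    (O : Type) [CommRing O] [IsDomain O] [Algebra ℤ_[p] O]
    (ψ : G →* Oˣ) (hψD : ∃ d ∈ D, ψ d ≠ 1)
    (hψG' : Set.InjOn ψ {g : G | (orderOf g).Coprime p})
    (hadj : Algebra.adjoin ℤ_[p] (Set.range fun g : G => ((ψ g : Oˣ) : O)) = ⊤) :
    Ideal.span {(MonoidAlgebra.lift ℤ_[p] O G ((Units.coeHom O).comp ψ))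
          ((Nat.card I : MonoidAlgebra ℤ_[p] G) * nuElt ℤ_[p] I)} +
      Ideal.span {(MonoidAlgebra.lift ℤ_[p] O G ((Units.coeHom O).comp ψ))
          ((Nat.card I : MonoidAlgebra ℤ_[p] G)
            - nuElt ℤ_[p] I * MonoidAlgebra.of ℤ_[p] G φt⁻¹)} *
        Ideal.map (MonoidAlgebra.lift ℤ_[p] O G ((Units.coeHom O).comp ψ)).toRingHom
          (∑ i ∈ Finset.range s, ZidealR ℤ_[p] σ (i + 1) * (kerIdealR ℤ_[p] D) ^ i)
    = (Ideal.map (MonoidAlgebra.lift ℤ_[p] O G ((Units.coeHom O).comp ψ)).toRingHom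
          (kerIdealR ℤ_[p] D)) ^ (s - 1) *
        Ideal.span {(MonoidAlgebra.lift ℤ_[p] O G ((Units.coeHom O).comp ψ))
          ((Nat.card I : MonoidAlgebra ℤ_[p] G)
            - nuElt ℤ_[p] I * MonoidAlgebra.of ℤ_[p] G φt⁻¹)} := by
  classical
  set f := MonoidAlgebra.lift ℤ_[p] O G ((Units.coeHom O).comp ψ) with hfdef
  set 𝓘 := Ideal.map f.toRingHom (kerIdealR ℤ_[p] D) with h𝓘
  have hpp : p.Prime := Fact.out
  have hs : s ≠ 0 := by
    rintro rfl
    apply hInontriv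
    rw [Subgroup.eq_bot_iff_forall]
    intro g hg
    obtain ⟨x, hx, -⟩ := hdec.2 g hg
    simpa using hx.symm
  have horder : ∀ g ∈ D, ∃ k, g ^ p ^ k = 1 := by
    intro g hg
    obtain ⟨k, hk⟩ := hD ⟨g, hg⟩
    exact ⟨k, by have := congrArg Subtype.val hk; simpa using this⟩
  have hψpow : ∀ g ∈ D, ψ g ≠ 1 → (((ψ g : Oˣ) : O) - 1) ∣ (p : O) := by
    intro g hg hne
    obtain ⟨k, hk⟩ := horder g hg
    refine sub_one_dvd_p hpp _ k ?_ ?_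
    · rw [← Units.val_pow_eq_pow_val, ← map_pow, hk, map_one, Units.val_one]
    · intro h; exact hne (Units.ext (by simpa using h))
  have hmem𝓘 : ∀ g ∈ D, ((ψ g : Oˣ) : O) - 1 ∈ 𝓘 := by
    intro g hg
    have h1 : (MonoidAlgebra.of ℤ_[p] G g - 1) ∈ kerIdealR ℤ_[p] D := by
      rw [kerIdealR, RingHom.mem_ker, map_sub, map_one]
      have h2 : (MonoidAlgebra.mapDomainRingHom ℤ_[p] (QuotientGroup.mk' D))
          (MonoidAlgebra.of ℤ_[p] G g)
          = MonoidAlgebra.of ℤ_[p] (G ⧸ D) (QuotientGroup.mk' D g) := by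
        simp [MonoidAlgebra.of_apply, Finsupp.mapDomain_single]
      rw [h2, show (QuotientGroup.mk' D) g = 1 from (QuotientGroup.eq_one_iff g).mpr hg,
        map_one, sub_self]
    have h2 := Ideal.mem_map_of_mem f.toRingHom h1
    have h3 : f.toRingHom (MonoidAlgebra.of ℤ_[p] G g - 1) = ((ψ g : Oˣ) : O) - 1 := by
      rw [map_sub, map_one]
      congr 1
      rw [show f.toRingHom (MonoidAlgebra.of ℤ_[p] G g) = f (MonoidAlgebra.of ℤ_[p] G g)
        from rfl, hfdef, MonoidAlgebra.lift_of]
      rfl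
    rwa [h3] at h2
  have hordl : ∀ l, ∃ m, m ≠ 0 ∧ orderOf (σ l) = p ^ m := by
    intro l
    obtain ⟨k, hk⟩ := horder (σ l) (hID (hdec.1 l))
    obtain ⟨m, hmk, hm⟩ := (Nat.dvd_prime_pow hpp).mp (orderOf_dvd_of_pow_eq_one hk)
    refine ⟨m, ?_, hm⟩
    rintro rfl
    exact hnt l (orderOf_eq_one_iff.mp (by simpa using hm))
  have hpdvd : ∀ l, (p : ℕ) ∣ orderOf (σ l) := by
    intro l
    obtain ⟨m, hm0, hm⟩ := hordl l
    rw [hm]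
    exact dvd_pow_self p hm0
  have hcardmem : ∀ (K : Ideal O), (p : O) ∈ K → ∀ l, ((orderOf (σ l) : ℕ) : O) ∈ K := by
    intro K hK l
    obtain ⟨c, hc⟩ := hpdvd l
    rw [hc]
    push_cast
    exact Ideal.mul_mem_right _ _ hK
  have hfof : f (MonoidAlgebra.of ℤ_[p] G φt⁻¹) = ((ψ φt⁻¹ : Oˣ) : O) := by
    rw [hfdef, MonoidAlgebra.lift_of]; rfl
  by_cases hcase : ∀ l, ψ (σ l) = 1
  · -- Case B : ψ trivial on I
    have hψI : ∀ g ∈ I, ψ g = 1 := by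
      intro g hg
      obtain ⟨x, hx, -⟩ := hdec.2 g hg
      rw [← hx, map_prod]
      refine Finset.prod_eq_one fun l _ => ?_
      obtain ⟨n, hn⟩ := (x l).2
      rw [← hn, map_zpow, hcase l, one_zpow]
    have hφψ : ψ φt ≠ 1 := by
      intro h
      obtain ⟨d, hd, hdne⟩ := hψD
      obtain ⟨n, hn⟩ := hφgen d hd
      have h1 : ψ (φt ^ n * d⁻¹) = 1 := hψI _ hn
      rw [map_mul, map_zpow, h, one_zpow, one_mul, map_inv] at h1
      exact hdne (by rw [← inv_inv (ψ d), h1, inv_one])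
    set γ := ((ψ φt⁻¹ : Oˣ) : O) with hγ
    set B := 1 - γ with hB
    have hγmul : γ * ((ψ φt : Oˣ) : O) = 1 := by
      rw [hγ, ← Units.val_mul, ← map_mul, inv_mul_cancel, map_one, Units.val_one]
    have hBdvd : B ∣ (((ψ φt : Oˣ) : O) - 1) :=
      ⟨((ψ φt : Oˣ) : O), by rw [hB]; linear_combination hγmul⟩
    have hdvdB : (((ψ φt : Oˣ) : O) - 1) ∣ B :=
      ⟨γ, by rw [hB]; linear_combination -hγmul⟩
    have hpB : (p : O) ∈ Ideal.span {B} := by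
      rw [Ideal.mem_span_singleton]
      exact dvd_trans hBdvd (hψpow φt hφt hφψ)
    have h𝓘B : 𝓘 = Ideal.span {B} := by
      apply le_antisymm
      · have hstep : 𝓘 ≤ Ideal.span ((fun d => ((ψ d : Oˣ) : O) - 1) '' (D : Set G)) :=
          map_ker_le ℤ_[p] D ψ
        refine le_trans hstep ?_
        rw [Ideal.span_le]
        rintro y ⟨d, hd, rfl⟩
        rw [SetLike.mem_coe, Ideal.mem_span_singleton]
        obtain ⟨n, hn⟩ := hφgen d hd
        have h1 : ψ (φt ^ n * d⁻¹) = 1 := hψI _ hn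
        rw [map_mul, map_zpow, map_inv] at h1
        have h2 : ψ d = ψ φt ^ n := (mul_inv_eq_one.mp h1).symm
        show B ∣ ((ψ d : Oˣ) : O) - 1
        rw [h2]
        exact dvd_trans hBdvd (zpow_sub_one_dvd' (ψ φt) n)
      · rw [Ideal.span_singleton_le_iff_mem]
        have h1 := hmem𝓘 φt⁻¹ (D.inv_mem hφt)
        have hBeq : B = -(γ - 1) := by rw [hB]; ring
        rw [hBeq]
        exact neg_mem h1
    have hNcard : Nat.card I = ∏ l, orderOf (σ l) := by
      have hmem : ∀ x : (∀ l, Subgroup.zpowers (σ l)), (∏ l, ((x l : G))) ∈ I :=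
        fun x => Subgroup.prod_mem I fun l _ => Subgroup.zpowers_le.mpr (hdec.1 l) (x l).2
      have hbij : Function.Bijective (fun x : (∀ l, Subgroup.zpowers (σ l)) =>
          (⟨∏ l, ((x l : G)), hmem x⟩ : I)) := by
        constructor
        · intro x y hxy
          have hval : (∏ l, ((x l : G))) = ∏ l, ((y l : G)) := congrArg Subtype.val hxy
          obtain ⟨z, hz, hu⟩ := hdec.2 _ (hmem y)
          exact ((hu x hval).trans (hu y rfl).symm)
        · rintro ⟨g, hg⟩
          obtain ⟨x, hx, -⟩ := hdec.2 g hg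
          exact ⟨x, Subtype.ext hx⟩
      rw [← Nat.card_eq_of_bijective _ hbij, Nat.card_pi]
      exact Finset.prod_congr rfl fun l _ => Nat.card_zpowers _
    have hNB : (Nat.card I : O) ∈ Ideal.span {B ^ s} := by
      rw [hNcard]
      push_cast
      have h1 := prod_mem_pow' (Ideal.span {B}) Finset.univ
        (fun l => ((orderOf (σ l) : ℕ) : O)) (fun l _ => hcardmem _ hpB l)
      rwa [Finset.card_univ, Fintype.card_fin, Ideal.span_singleton_pow] at h1
    have hnuI : f (nuElt ℤ_[p] I) = (Nat.card I : O) := lift_nuElt_card ℤ_[p] ψ I hψI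
    have hx1 : f ((Nat.card I : MonoidAlgebra ℤ_[p] G) * nuElt ℤ_[p] I)
        = (Nat.card I : O) * (Nat.card I : O) := by
      rw [map_mul, map_natCast, hnuI]
    have hx2 : f ((Nat.card I : MonoidAlgebra ℤ_[p] G)
          - nuElt ℤ_[p] I * MonoidAlgebra.of ℤ_[p] G φt⁻¹)
        = (Nat.card I : O) * B := by
      rw [map_sub, map_mul, map_natCast, hnuI, hfof, hB]
      ring
    have hnuK : ∀ l, (MonoidAlgebra.lift ℤ_[p] O G ((Units.coeHom O).comp ψ))
        (nuElt ℤ_[p] (Subgroup.zpowers (σ l)))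
        ∈ Ideal.map (MonoidAlgebra.lift ℤ_[p] O G ((Units.coeHom O).comp ψ)).toRingHom
          (kerIdealR ℤ_[p] D) := by
      intro l
      rw [← hfdef, ← h𝓘, h𝓘B]
      rw [lift_nuElt_card ℤ_[p] ψ _ (by rintro g ⟨n, rfl⟩; rw [map_zpow, hcase l, one_zpow])]
      rw [Nat.card_zpowers]
      exact hcardmem _ hpB l
    have hmap := mapSum_eq ℤ_[p] ψ D σ hs hnuK
    rw [← hfdef, ← h𝓘] at hmap
    rw [hx1, hx2, hmap, h𝓘B, Ideal.span_singleton_pow,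
      Ideal.span_singleton_mul_span_singleton, Ideal.span_singleton_mul_span_singleton]
    have hpow : B ^ (s - 1) * B = B ^ s := by
      rw [← pow_succ]
      congr 1
      omega
    have hcomm : (Nat.card I : O) * B * B ^ (s - 1) = B ^ (s - 1) * ((Nat.card I : O) * B) := by
      ring
    rw [hcomm, Submodule.add_eq_sup, sup_eq_right.mpr]
    rw [Ideal.span_singleton_le_iff_mem, Ideal.mem_span_singleton]
    obtain ⟨c, hc⟩ := Ideal.mem_span_singleton.mp hNB
    refine ⟨c, ?_⟩
    calc (Nat.card I : O) * (Nat.card I : O) = (Nat.card I : O) * (B ^ s * c) := by rw [← hc]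
      _ = B ^ (s - 1) * ((Nat.card I : O) * B) * c := by rw [← hpow]; ring
  · -- Case A : ψ nontrivial on I
    push_neg at hcase
    obtain ⟨l0, hl0⟩ := hcase
    have hp𝓘 : (p : O) ∈ 𝓘 := by
      obtain ⟨c, hc⟩ := hψpow (σ l0) (hID (hdec.1 l0)) hl0
      rw [hc]
      exact Ideal.mul_mem_right _ _ (hmem𝓘 _ (hID (hdec.1 l0)))
    have hnuK : ∀ l, (MonoidAlgebra.lift ℤ_[p] O G ((Units.coeHom O).comp ψ))
        (nuElt ℤ_[p] (Subgroup.zpowers (σ l)))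
        ∈ Ideal.map (MonoidAlgebra.lift ℤ_[p] O G ((Units.coeHom O).comp ψ)).toRingHom
          (kerIdealR ℤ_[p] D) := by
      intro l
      rw [← hfdef, ← h𝓘]
      by_cases hl : ψ (σ l) = 1
      · rw [lift_nuElt_card ℤ_[p] ψ _ (by rintro g ⟨n, rfl⟩; rw [map_zpow, hl, one_zpow])]
        rw [Nat.card_zpowers]
        exact hcardmem 𝓘 hp𝓘 l
      · rw [lift_nuElt_zero ℤ_[p] ψ _ ⟨σ l, Subgroup.mem_zpowers _, hl⟩]
        exact Ideal.zero_mem _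
    have hnuI : f (nuElt ℤ_[p] I) = 0 :=
      lift_nuElt_zero ℤ_[p] ψ I ⟨σ l0, hdec.1 l0, hl0⟩
    have hx1 : f ((Nat.card I : MonoidAlgebra ℤ_[p] G) * nuElt ℤ_[p] I) = 0 := by
      rw [map_mul, hnuI, mul_zero]
    have hx2 : f ((Nat.card I : MonoidAlgebra ℤ_[p] G)
          - nuElt ℤ_[p] I * MonoidAlgebra.of ℤ_[p] G φt⁻¹) = (Nat.card I : O) := by
      rw [map_sub, map_mul, hnuI, zero_mul, sub_zero, map_natCast]
    have hmap := mapSum_eq ℤ_[p] ψ D σ hs hnuK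
    rw [← hfdef, ← h𝓘] at hmap
    rw [hx1, hx2, hmap,
      show Ideal.span ({(0 : O)} : Set O) = ⊥ from Ideal.span_singleton_eq_bot.mpr rfl,
      Submodule.add_eq_sup, bot_sup_eq, mul_comm]
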